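/- Let n ≥ 1 and 0 ≤ β < α ≤ 1, and consider single participation (k = 1, b = n). Define 𝓔 = (1/√n) · sens_{1,n}(C_{α,β}) · ‖C_{α,β}‖_F. If α < 1, then 1 ≤ 𝓔 ≤ (1/(α − β)²)·log(1/(1 − α²)). If α = 1, then max{1, (log(n+1) − 1)/4} ≤ 𝓔 ≤ (1 + log n)/(1 − β)². Here log denotes the natural logarithm. -/

import Mathlib

open Finset Matrix

/-- `r_m = (1/4^m)·C(2m,m)`. -/
noncomputable def rCoef (m : ℕ) : ℝ := (1 / 4 ^ m) * (Nat.choose (2 * m) m : ℝ)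

/-- `c_m = Σ_{i=0}^{m} α^{m−i} r_{m−i} r_i β^i`. -/
noncomputable def cCoef (α β : ℝ) (m : ℕ) : ℝ :=
  ∑ i ∈ Finset.range (m + 1), α ^ (m - i) * rCoef (m - i) * rCoef i * β ^ i

/-- The square root factor `C_{α,β}`, lower triangular Toeplitz with entries `c_{i-j}`. -/
noncomputable def Cmat (n : ℕ) (α β : ℝ) : Matrix (Fin n) (Fin n) ℝ :=
  Matrix.of fun i j => if (j : ℕ) ≤ (i : ℕ) then cCoef α β ((i : ℕ) - (j : ℕ)) else 0

/-- The `b`-min-separated `L2`-sensitivity with at most `k` participations. -/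
noncomputable def sens (n b k : ℕ) (C : Matrix (Fin n) (Fin n) ℝ) : ℝ :=
  Real.sqrt (sSup { x : ℝ | ∃ π : Finset (Fin n), π.card ≤ k ∧
    (∀ i ∈ π, ∀ j ∈ π, i ≠ j → b ≤ Nat.dist (i : ℕ) (j : ℕ)) ∧
    x = ∑ i ∈ π, ∑ j ∈ π, (Cᵀ * C) i j })

/-- The Frobenius norm. -/
noncomputable def frob (n : ℕ) (C : Matrix (Fin n) (Fin n) ℝ) : ℝ :=
  Real.sqrt (∑ i : Fin n, ∑ j : Fin n, (C i j) ^ 2)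


lemma rCoef_nonneg (m : ℕ) : 0 ≤ rCoef m := by unfold rCoef; positivity

lemma rCoef_zero : rCoef 0 = 1 := by simp [rCoef]

lemma rCoef_succ (m : ℕ) : rCoef (m + 1) = rCoef m * ((2 * m + 1) / (2 * m + 2)) := by
  have h := Nat.succ_mul_centralBinom_succ m
  have h' : ((m : ℝ) + 1) * (Nat.choose (2 * (m + 1)) (m + 1) : ℝ)
      = 2 * (2 * m + 1) * (Nat.choose (2 * m) m : ℝ) := by
    unfold Nat.centralBinom at h
    exact_mod_cast congrArg (Nat.cast : ℕ → ℝ) h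
  have hm1 : ((m : ℝ) + 1) ≠ 0 := by positivity
  unfold rCoef
  rw [pow_succ]
  field_simp
  linear_combination 2 * h'

lemma rCoef_sq_le (m : ℕ) : ((m : ℝ) + 1) * rCoef m ^ 2 ≤ 1 := by
  induction m with
  | zero => simp [rCoef_zero]
  | succ m ih =>
    have hq : (0:ℝ) ≤ rCoef m ^ 2 := sq_nonneg _
    have ha : ((2*(m:ℝ)+1)/(2*(m:ℝ)+2))^2 ≤ ((m:ℝ)+1)/((m:ℝ)+2) := by
      rw [div_pow, div_le_div_iff₀ (by positivity) (by positivity)]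
      nlinarith [sq_nonneg ((m:ℝ))]
    rw [rCoef_succ, mul_pow]
    push_cast
    calc ((m:ℝ)+1+1) * (rCoef m ^2 * ((2*(m:ℝ)+1)/(2*(m:ℝ)+2))^2)
        ≤ ((m:ℝ)+1+1) * (rCoef m^2 * (((m:ℝ)+1)/((m:ℝ)+2))) := by
          apply mul_le_mul_of_nonneg_left (mul_le_mul_of_nonneg_left ha hq) (by positivity)
      _ = ((m:ℝ)+1) * rCoef m^2 := by field_simp; ring
      _ ≤ 1 := ih

lemma rCoef_sq_ge' : ∀ m : ℕ, 1 ≤ m → (1:ℝ) ≤ 4 * m * rCoef m ^ 2 := by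
  intro m hm
  induction m, hm using Nat.le_induction with
  | base => norm_num [rCoef_succ, rCoef_zero]
  | succ m hm ih =>
    have hm' : (1:ℝ) ≤ (m:ℝ) := by exact_mod_cast hm
    rw [rCoef_succ, mul_pow, div_pow]
    push_cast
    have h1 : (0:ℝ) < (2*(m:ℝ)+2)^2 := by positivity
    rw [show (4*((m:ℝ)+1) * (rCoef m^2 * ((2*(m:ℝ)+1)^2/(2*(m:ℝ)+2)^2)))
        = (4*((m:ℝ)+1) * rCoef m^2 * (2*(m:ℝ)+1)^2)/((2*(m:ℝ)+2)^2) by ring, le_div_iff₀ h1]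
    nlinarith [sq_nonneg (rCoef m), sq_nonneg ((m:ℝ))]

lemma rCoef_sq_ge (m : ℕ) : (1:ℝ) ≤ 4 * ((m:ℝ) + 1) * rCoef m ^ 2 := by
  rcases Nat.eq_zero_or_pos m with h | h
  · subst h; norm_num [rCoef_zero]
  · have := rCoef_sq_ge' m h
    nlinarith [sq_nonneg (rCoef m)]

lemma rCoef_mul_le (a b : ℕ) : rCoef a * rCoef b ≤ rCoef (a + b) := by
  have hN : Nat.choose (2*a) a * Nat.choose (2*b) b ≤ Nat.choose (2*(a+b)) (a+b) := by
    have h := Nat.add_choose_eq (2*a) (2*b) (a+b)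
    rw [show 2*a + 2*b = 2*(a+b) by ring] at h
    rw [h]
    exact Finset.single_le_sum (f := fun ij : ℕ × ℕ => Nat.choose (2*a) ij.1 * Nat.choose (2*b) ij.2)
      (fun i _ => Nat.zero_le _) (a := ((a,b) : ℕ × ℕ)) (Finset.HasAntidiagonal.mem_antidiagonal.mpr rfl)
  unfold rCoef
  have hN' : (Nat.choose (2*a) a : ℝ) * Nat.choose (2*b) b ≤ Nat.choose (2*(a+b)) (a+b) := by
    exact_mod_cast hN
  rw [pow_add]
  have : (0:ℝ) < 4^a * 4^b := by positivity
  calc 1/4^a * (Nat.choose (2*a) a:ℝ) * (1/4^b * (Nat.choose (2*b) b:ℝ))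
      = ((Nat.choose (2*a) a:ℝ) * (Nat.choose (2*b) b:ℝ)) / (4^a * 4^b) := by ring
    _ ≤ (Nat.choose (2*(a+b)) (a+b):ℝ) / (4^a * 4^b) := by gcongr
    _ = 1/(4^a*4^b) * (Nat.choose (2*(a+b)) (a+b):ℝ) := by ring

lemma cCoef_nonneg {α β : ℝ} (hα : 0 ≤ α) (hβ : 0 ≤ β) (m : ℕ) : 0 ≤ cCoef α β m := by
  apply Finset.sum_nonneg
  intro i _
  have := rCoef_nonneg (m - i); have := rCoef_nonneg i
  positivity

lemma cCoef_zero (α β : ℝ) : cCoef α β 0 = 1 := by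
  simp [cCoef, rCoef_zero]

lemma cCoef_mul_le {α β : ℝ} (hβ : 0 ≤ β) (hβα : β < α) (m : ℕ) :
    (α - β) * cCoef α β m ≤ rCoef m * α ^ (m + 1) := by
  have hα : 0 < α := lt_of_le_of_lt hβ hβα
  have h1 : cCoef α β m ≤ rCoef m * ∑ i ∈ range (m + 1), α ^ (m - i) * β ^ i := by
    rw [Finset.mul_sum]
    apply Finset.sum_le_sum
    intro i hi
    have him : i ≤ m := Nat.lt_succ_iff.mp (Finset.mem_range.mp hi)
    have hr := rCoef_mul_le (m - i) i
    rw [Nat.sub_add_cancel him] at hr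
    calc α ^ (m - i) * rCoef (m - i) * rCoef i * β ^ i
        = (rCoef (m - i) * rCoef i) * (α ^ (m - i) * β ^ i) := by ring
      _ ≤ rCoef m * (α ^ (m - i) * β ^ i) :=
          mul_le_mul_of_nonneg_right hr (by positivity)
  have h2 : (α - β) * ∑ i ∈ range (m + 1), α ^ (m - i) * β ^ i ≤ α ^ (m + 1) := by
    have h := geom_sum₂_mul β α (m + 1)
    have he : (∑ i ∈ range (m + 1), β ^ i * α ^ (m + 1 - 1 - i))
        = ∑ i ∈ range (m + 1), α ^ (m - i) * β ^ i := by
      apply Finset.sum_congr rfl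
      intro i _
      simp [mul_comm]
    rw [he] at h
    have hb : (0:ℝ) ≤ β ^ (m + 1) := by positivity
    nlinarith [h]
  calc (α - β) * cCoef α β m
      ≤ (α - β) * (rCoef m * ∑ i ∈ range (m + 1), α ^ (m - i) * β ^ i) :=
        mul_le_mul_of_nonneg_left h1 (by linarith)
    _ = rCoef m * ((α - β) * ∑ i ∈ range (m + 1), α ^ (m - i) * β ^ i) := by ring
    _ ≤ rCoef m * α ^ (m + 1) := mul_le_mul_of_nonneg_left h2 (rCoef_nonneg m)

lemma rCoef_le_cCoef {β : ℝ} (hβ : 0 ≤ β) (m : ℕ) : rCoef m ≤ cCoef 1 β m := by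
  have h0 : (0:ℕ) ∈ range (m + 1) := Finset.mem_range.mpr (Nat.succ_pos m)
  have := Finset.single_le_sum
    (f := fun i => (1:ℝ) ^ (m - i) * rCoef (m - i) * rCoef i * β ^ i)
    (fun i _ => by have := rCoef_nonneg (m - i); have := rCoef_nonneg i; positivity) h0
  simpa [rCoef_zero, cCoef] using this

lemma cCoef_sq_le {α β : ℝ} (hβ : 0 ≤ β) (hβα : β < α) (m : ℕ) :
    ((m:ℝ) + 1) * ((α - β) ^ 2 * cCoef α β m ^ 2) ≤ (α ^ 2) ^ (m + 1) := by
  have hα : 0 < α := lt_of_le_of_lt hβ hβα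
  have hc := cCoef_nonneg hα.le hβ m
  have h1 := cCoef_mul_le hβ hβα m
  have h2 : (α - β) ^ 2 * cCoef α β m ^ 2 ≤ rCoef m ^ 2 * (α ^ (m+1)) ^ 2 := by
    have hl : 0 ≤ (α - β) * cCoef α β m := mul_nonneg (by linarith) hc
    nlinarith [h1]
  have h3 := rCoef_sq_le m
  have hp : (0:ℝ) ≤ (α ^ (m+1))^2 := by positivity
  calc ((m:ℝ) + 1) * ((α - β) ^ 2 * cCoef α β m ^ 2)
      ≤ ((m:ℝ) + 1) * (rCoef m ^ 2 * (α ^ (m+1)) ^ 2) := by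
        apply mul_le_mul_of_nonneg_left h2 (by positivity)
    _ = (((m:ℝ) + 1) * rCoef m ^ 2) * (α ^ (m+1)) ^ 2 := by ring
    _ ≤ 1 * (α ^ (m+1)) ^ 2 := mul_le_mul_of_nonneg_right h3 hp
    _ = (α ^ 2) ^ (m + 1) := by rw [one_mul, ← pow_mul, ← pow_mul, Nat.mul_comm]

lemma cCoef_one_sq_ge {β : ℝ} (hβ : 0 ≤ β) (m : ℕ) :
    (1:ℝ) ≤ 4 * ((m:ℝ) + 1) * cCoef 1 β m ^ 2 := by
  have h1 := rCoef_le_cCoef hβ m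
  have h2 := rCoef_sq_ge m
  have h0 := rCoef_nonneg m
  have hm : (0:ℝ) ≤ (m:ℝ) + 1 := by positivity
  have hsq : rCoef m ^ 2 ≤ cCoef 1 β m ^ 2 := pow_le_pow_left₀ h0 h1 2
  nlinarith

lemma col_sum (n : ℕ) (α β : ℝ) (i : Fin n) :
    ∑ m : Fin n, Cmat n α β m i * Cmat n α β m i
      = ∑ d ∈ range (n - (i : ℕ)), cCoef α β d ^ 2 := by
  calc ∑ m : Fin n, Cmat n α β m i * Cmat n α β m i
      = ∑ k ∈ range n, (if (i:ℕ) ≤ k then cCoef α β (k - (i:ℕ)) ^ 2 else 0) := by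
        rw [← Fin.sum_univ_eq_sum_range (fun k => if (i:ℕ) ≤ k then cCoef α β (k - (i:ℕ)) ^ 2 else 0) n]
        apply Finset.sum_congr rfl
        intro m _
        show Cmat n α β m i * Cmat n α β m i = _
        unfold Cmat
        simp only [Matrix.of_apply]
        by_cases h : (i:ℕ) ≤ (m:ℕ)
        · rw [if_pos h, if_pos h, pow_two]
        · rw [if_neg h, if_neg h, mul_zero]
    _ = ∑ k ∈ Finset.Ico (i:ℕ) n, (if (i:ℕ) ≤ k then cCoef α β (k - (i:ℕ)) ^ 2 else 0) := by
        rw [Finset.range_eq_Ico,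
          ← Finset.sum_Ico_consecutive _ (Nat.zero_le (i:ℕ)) (le_of_lt i.isLt)]
        have : ∑ k ∈ Finset.Ico 0 (i:ℕ), (if (i:ℕ) ≤ k then cCoef α β (k - (i:ℕ)) ^ 2 else 0) = 0 := by
          apply Finset.sum_eq_zero
          intro k hk
          have := (Finset.mem_Ico.mp hk).2
          simp [Nat.not_le.mpr this]
        rw [this, zero_add]
    _ = ∑ k ∈ Finset.Ico (i:ℕ) n, cCoef α β (k - (i:ℕ)) ^ 2 := by
        apply Finset.sum_congr rfl
        intro k hk
        simp [(Finset.mem_Ico.mp hk).1]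
    _ = ∑ d ∈ range (n - (i:ℕ)), cCoef α β d ^ 2 := by
        rw [Finset.sum_Ico_eq_sum_range]
        apply Finset.sum_congr rfl
        intro d _
        simp

lemma col_le (n : ℕ) (α β : ℝ) (i : Fin n) :
    ∑ d ∈ range (n - (i : ℕ)), cCoef α β d ^ 2 ≤ ∑ d ∈ range n, cCoef α β d ^ 2 := by
  apply Finset.sum_le_sum_of_subset_of_nonneg
  · exact Finset.range_subset_range.mpr (Nat.sub_le n i)
  · intro d _ _; positivity

lemma sens_eq (n : ℕ) (hn : 1 ≤ n) (α β : ℝ) :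
    sens n n 1 (Cmat n α β) = Real.sqrt (∑ d ∈ range n, cCoef α β d ^ 2) := by
  unfold sens
  congr 1
  apply IsGreatest.csSup_eq
  constructor
  · refine ⟨{(⟨0, hn⟩ : Fin n)}, by simp, ?_, ?_⟩
    · intro i hi j hj hij
      simp only [Finset.mem_singleton] at hi hj
      exact absurd (hi.trans hj.symm) hij
    · rw [Finset.sum_singleton, Finset.sum_singleton, Matrix.mul_apply]
      simp only [Matrix.transpose_apply]
      rw [col_sum]
      norm_num
  · rintro x ⟨π, hcard, hsep, rfl⟩
    rcases Finset.eq_empty_or_nonempty π with h | ⟨i, hi⟩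
    · subst h
      simp only [Finset.sum_empty]
      positivity
    · have hπ : π = {i} := Finset.eq_singleton_iff_unique_mem.mpr
        ⟨hi, fun j hj => Finset.card_le_one.mp hcard j hj i hi⟩
      subst hπ
      rw [Finset.sum_singleton, Finset.sum_singleton, Matrix.mul_apply]
      simp only [Matrix.transpose_apply]
      rw [col_sum]
      exact col_le n α β i

lemma frob_eq (n : ℕ) (α β : ℝ) :
    frob n (Cmat n α β)
      = Real.sqrt (∑ j : Fin n, ∑ d ∈ range (n - (j : ℕ)), cCoef α β d ^ 2) := by
  unfold frob
  congr 1
  rw [Finset.sum_comm]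
  apply Finset.sum_congr rfl
  intro j _
  rw [← col_sum]
  apply Finset.sum_congr rfl
  intro i _
  rw [pow_two]

lemma E_ge {n : ℕ} (hn : 1 ≤ n) {S T u : ℝ} (hS : 0 ≤ S) (hu : 0 ≤ u)
    (h : u ^ 2 * n ≤ S * T) : u ≤ (1 / Real.sqrt n) * Real.sqrt S * Real.sqrt T := by
  have hn0 : (0:ℝ) < n := by exact_mod_cast hn
  have hn' : (0:ℝ) < Real.sqrt n := Real.sqrt_pos.mpr hn0
  have h1 : Real.sqrt (u ^ 2 * n) ≤ Real.sqrt (S * T) := Real.sqrt_le_sqrt h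
  rw [Real.sqrt_mul (sq_nonneg u), Real.sqrt_sq hu, Real.sqrt_mul hS] at h1
  calc u = (1 / Real.sqrt n) * (u * Real.sqrt n) := by field_simp
    _ ≤ (1 / Real.sqrt n) * (Real.sqrt S * Real.sqrt T) := by
        apply mul_le_mul_of_nonneg_left h1 (by positivity)
    _ = (1 / Real.sqrt n) * Real.sqrt S * Real.sqrt T := by ring

lemma E_le {n : ℕ} (hn : 1 ≤ n) {S T : ℝ} (hS : 0 ≤ S) (hT : T ≤ n * S) :
    (1 / Real.sqrt n) * Real.sqrt S * Real.sqrt T ≤ S := by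
  have hn0 : (0:ℝ) < n := by exact_mod_cast hn
  have hn' : (0:ℝ) < Real.sqrt n := Real.sqrt_pos.mpr hn0
  have h1 : Real.sqrt T ≤ Real.sqrt n * Real.sqrt S := by
    rw [← Real.sqrt_mul hn0.le]
    exact Real.sqrt_le_sqrt hT
  calc (1 / Real.sqrt n) * Real.sqrt S * Real.sqrt T
      ≤ (1 / Real.sqrt n) * Real.sqrt S * (Real.sqrt n * Real.sqrt S) := by
        apply mul_le_mul_of_nonneg_left h1 (by positivity)
    _ = (Real.sqrt n / Real.sqrt n) * (Real.sqrt S * Real.sqrt S) := by ring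
    _ = S := by rw [div_self (ne_of_gt hn'), one_mul, Real.mul_self_sqrt hS]

noncomputable def Hsum (n : ℕ) : ℝ := ∑ d ∈ range n, 1 / ((d : ℝ) + 1)

lemma Hsum_nonneg (n : ℕ) : 0 ≤ Hsum n := by
  apply Finset.sum_nonneg; intro d _; positivity

lemma one_le_Hsum {n : ℕ} (hn : 1 ≤ n) : 1 ≤ Hsum n := by
  have h0 : (0:ℕ) ∈ range n := Finset.mem_range.mpr hn
  have := Finset.single_le_sum (f := fun d : ℕ => 1 / ((d : ℝ) + 1))
    (fun d _ => by positivity) h0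
  simpa [Hsum] using this

lemma sum_Hsum (n : ℕ) : ∑ j ∈ range n, Hsum (j + 1) = ((n:ℝ) + 1) * Hsum n - n := by
  induction n with
  | zero => simp [Hsum]
  | succ n ih =>
    rw [Finset.sum_range_succ, ih]
    have h : Hsum (n + 1) = Hsum n + 1 / ((n:ℝ) + 1) := Finset.sum_range_succ _ n
    rw [h]
    have hn : ((n:ℝ) + 1) ≠ 0 := by positivity
    push_cast
    field_simp
    ring

lemma harmonic_cast (n : ℕ) : ((harmonic n : ℚ) : ℝ) = Hsum n := by
  unfold harmonic Hsum
  push_cast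
  apply Finset.sum_congr rfl
  intro d _
  norm_num

lemma log_le_Hsum (n : ℕ) : Real.log ((n:ℝ) + 1) ≤ Hsum n := by
  have := log_add_one_le_harmonic n
  rw [harmonic_cast] at this
  convert this using 2
  push_cast
  ring

lemma Hsum_le_log (n : ℕ) : Hsum n ≤ 1 + Real.log n := by
  have := harmonic_le_one_add_log n
  rwa [harmonic_cast] at this

lemma sum_pow_div_le_log {x : ℝ} (hx0 : 0 ≤ x) (hx1 : x < 1) (n : ℕ) :
    ∑ m ∈ range n, x ^ (m + 1) / ((m:ℝ) + 1) ≤ Real.log (1 / (1 - x)) := by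
  have h := Real.hasSum_pow_div_log_of_abs_lt_one (x := x) (by rwa [abs_of_nonneg hx0])
  have hs := sum_le_hasSum (range n) (fun m _ => by positivity) h
  rw [one_div, Real.log_inv]
  exact hs

lemma H_le_sum_c {β : ℝ} (hβ : 0 ≤ β) (m : ℕ) :
    Hsum m / 4 ≤ ∑ d ∈ range m, cCoef 1 β d ^ 2 := by
  rw [Hsum, Finset.sum_div]
  apply Finset.sum_le_sum
  intro d _
  have h := cCoef_one_sq_ge hβ d
  have hd : (0:ℝ) < (d:ℝ) + 1 := by positivity
  rw [div_le_iff₀ (by norm_num : (0:ℝ) < 4), div_le_iff₀ hd]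
  linarith

set_option maxHeartbeats 1000000 in
/-- bounds on the expected approximation error of the square root
factorization in the single participation setting (`k = 1`, `b = n`). -/
theorem approximation_error_single_participation (n : ℕ) (hn : 1 ≤ n) (α β : ℝ)
    (hβ : 0 ≤ β) (hβα : β < α) (hα : α ≤ 1) :
    (α < 1 →
      1 ≤ (1 / Real.sqrt n) * sens n n 1 (Cmat n α β) * frob n (Cmat n α β) ∧
        (1 / Real.sqrt n) * sens n n 1 (Cmat n α β) * frob n (Cmat n α β) ≤
          (1 / (α - β) ^ 2) * Real.log (1 / (1 - α ^ 2))) ∧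
    (α = 1 →
      max 1 ((Real.log (n + 1) - 1) / 4) ≤
          (1 / Real.sqrt n) * sens n n 1 (Cmat n α β) * frob n (Cmat n α β) ∧
        (1 / Real.sqrt n) * sens n n 1 (Cmat n α β) * frob n (Cmat n α β) ≤
          (1 + Real.log n) / (1 - β) ^ 2) := by
  have hα0 : 0 < α := lt_of_le_of_lt hβ hβα
  have hn0 : (0:ℝ) < n := by exact_mod_cast hn
  set S := ∑ d ∈ range n, cCoef α β d ^ 2 with hSdef
  set T := ∑ j : Fin n, ∑ d ∈ range (n - (j:ℕ)), cCoef α β d ^ 2 with hTdef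
  have hsens : sens n n 1 (Cmat n α β) = Real.sqrt S := sens_eq n hn α β
  have hfrob : frob n (Cmat n α β) = Real.sqrt T := frob_eq n α β
  have hS0 : 0 ≤ S := Finset.sum_nonneg fun d _ => sq_nonneg _
  have hS1 : 1 ≤ S := by
    have h0 : (0:ℕ) ∈ range n := Finset.mem_range.mpr hn
    have := Finset.single_le_sum (f := fun d => cCoef α β d ^ 2)
      (fun d _ => sq_nonneg _) h0
    simpa [cCoef_zero] using this
  have hT1 : (n:ℝ) ≤ T := by
    calc (n:ℝ) = ∑ _j : Fin n, (1:ℝ) := by simp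
      _ ≤ T := by
        apply Finset.sum_le_sum
        intro j _
        have h0 : (0:ℕ) ∈ range (n - (j:ℕ)) := Finset.mem_range.mpr (by omega)
        have := Finset.single_le_sum (f := fun d => cCoef α β d ^ 2)
          (fun d _ => sq_nonneg _) h0
        simpa [cCoef_zero] using this
  have hTn : T ≤ (n:ℝ) * S := by
    calc T ≤ ∑ _j : Fin n, S := Finset.sum_le_sum fun j _ => col_le n α β j
      _ = (n:ℝ) * S := by simp [mul_comm]
  have hone : 1 ≤ (1 / Real.sqrt n) * sens n n 1 (Cmat n α β) * frob n (Cmat n α β) := by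
    rw [hsens, hfrob]
    apply E_ge hn hS0 zero_le_one
    rw [one_pow, one_mul]
    calc (n:ℝ) = 1 * n := (one_mul _).symm
      _ ≤ S * T := mul_le_mul hS1 hT1 hn0.le hS0
  have hEleS : (1 / Real.sqrt n) * sens n n 1 (Cmat n α β) * frob n (Cmat n α β) ≤ S := by
    rw [hsens, hfrob]; exact E_le hn hS0 hTn
  constructor
  · intro hα1
    refine ⟨hone, ?_⟩
    refine le_trans hEleS ?_
    have hx1 : α ^ 2 < 1 := by nlinarith
    have hab : (0:ℝ) < (α - β) ^ 2 := by
      have : 0 < α - β := by linarith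
      positivity
    have hsum : (α - β) ^ 2 * S ≤ Real.log (1 / (1 - α ^ 2)) := by
      calc (α - β) ^ 2 * S = ∑ d ∈ range n, (α - β) ^ 2 * cCoef α β d ^ 2 := Finset.mul_sum _ _ _
        _ ≤ ∑ d ∈ range n, (α ^ 2) ^ (d + 1) / ((d:ℝ) + 1) := by
            apply Finset.sum_le_sum
            intro d _
            have h := cCoef_sq_le hβ hβα d
            have hd : (0:ℝ) < (d:ℝ) + 1 := by positivity
            rw [le_div_iff₀ hd]
            nlinarith [h]
        _ ≤ Real.log (1 / (1 - α ^ 2)) := sum_pow_div_le_log (sq_nonneg α) hx1 n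
    rw [show (1 / (α - β) ^ 2) * Real.log (1 / (1 - α ^ 2))
        = Real.log (1 / (1 - α ^ 2)) / ((α - β) ^ 2) by ring, le_div_iff₀ hab]
    linarith
  · intro hα1
    subst hα1
    have hβ1 : β < 1 := hβα
    constructor
    · apply max_le hone
      set u := (Real.log ((n:ℝ) + 1) - 1) / 4 with hudef
      by_cases hu : u ≤ 1
      · exact le_trans hu hone
      · push_neg at hu
        rw [hsens, hfrob]
        apply E_ge hn hS0 (by linarith)
        have hL := log_le_Hsum n
        have hH1 : 1 ≤ Hsum n := one_le_Hsum hn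
        have hSH : Hsum n / 4 ≤ S := H_le_sum_c hβ n
        have hTH : ((n:ℝ) * (Hsum n - 1)) / 4 ≤ T := by
          have step1 : ((n:ℝ) * (Hsum n - 1)) / 4 ≤ (((n:ℝ) + 1) * Hsum n - n) / 4 := by
            have := Hsum_nonneg n
            nlinarith
          refine le_trans step1 ?_
          calc (((n:ℝ) + 1) * Hsum n - n) / 4 = (∑ j ∈ range n, Hsum (j + 1)) / 4 := by
                rw [sum_Hsum]
            _ = ∑ j ∈ range n, Hsum (j + 1) / 4 := Finset.sum_div _ _ _
            _ = ∑ j ∈ range n, Hsum (n - j) / 4 := by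
                rw [← Finset.sum_range_reflect (fun j => Hsum (j + 1) / 4) n]
                apply Finset.sum_congr rfl
                intro j hj
                have hjn : j < n := Finset.mem_range.mp hj
                have : n - 1 - j + 1 = n - j := by omega
                rw [this]
            _ ≤ T := by
                rw [← Fin.sum_univ_eq_sum_range (fun j => Hsum (n - j) / 4) n]
                apply Finset.sum_le_sum
                intro j _
                exact H_le_sum_c hβ (n - (j:ℕ))
        have hLu : Real.log ((n:ℝ) + 1) = 4 * u + 1 := by rw [hudef]; ring
        have hkey : u ^ 2 * n ≤ (Hsum n / 4) * ((n:ℝ) * (Hsum n - 1) / 4) := by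
          have hH5 : 4 * u + 1 ≤ Hsum n := by rw [← hLu]; exact hL
          nlinarith [mul_nonneg (sub_nonneg.mpr hH5) (by linarith : (0:ℝ) ≤ Hsum n + 4 * u),
            hn0.le, mul_le_mul_of_nonneg_left
              (mul_nonneg (sub_nonneg.mpr hH5) (by linarith : (0:ℝ) ≤ Hsum n + 4 * u)) hn0.le]
        refine le_trans hkey ?_
        apply mul_le_mul hSH hTH ?_ hS0
        have := Hsum_nonneg n
        nlinarith
    · refine le_trans hEleS ?_
      have hb2 : (0:ℝ) < (1 - β) ^ 2 := by
        have : 0 < 1 - β := by linarith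
        positivity
      rw [le_div_iff₀ hb2, hSdef]
      calc (∑ d ∈ range n, cCoef 1 β d ^ 2) * (1 - β) ^ 2
          = ∑ d ∈ range n, cCoef 1 β d ^ 2 * (1 - β) ^ 2 := by rw [Finset.sum_mul]
        _ ≤ ∑ d ∈ range n, 1 / ((d:ℝ) + 1) := by
            apply Finset.sum_le_sum
            intro d _
            have h := cCoef_sq_le hβ hβα d
            simp only [one_pow] at h
            have hd : (0:ℝ) < (d:ℝ) + 1 := by positivity
            rw [le_div_iff₀ hd]
            nlinarith [h]
        _ = Hsum n := by rw [Hsum]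
        _ ≤ 1 + Real.log n := Hsum_le_log n
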